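/- Let n ≥ 2, let V₁ and V₂ be complementary complex linear subspaces of ℂⁿ, and write each z ∈ ℂⁿ uniquely as z = z' + z'' with z' ∈ V₁, z'' ∈ V₂. Let X ⊆ ℂⁿ be an unbounded subset having a unique tangent cone at infinity C_∞(X), and suppose there are reals A > 0 and B ≥ 1 such that every v ∈ C_∞(X) satisfies the strict inequality ‖v''‖ < A(1 + ‖v'‖)^B. Fix v ∈ V₁ and T₀ > 0, and let λ : [T₀, ∞) → X be any function such that the V₁-component of λ(t) equals t·v for all t ≥ T₀. Then the function t ↦ ‖λ(t) − t·v‖ / t is bounded on [T₀, ∞). -/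

import Mathlib

/-- The tangent cone at infinity of `X ⊆ ℂⁿ` with respect to a sequence `t` of
(positive) real numbers tending to `∞`: the set of `v` for which there is a sequence
`x j ∈ X` with `x j / t j → v`. -/
def tangentConeAtInftyWrt (n : ℕ) (X : Set (EuclideanSpace ℂ (Fin n))) (t : ℕ → ℝ) :
    Set (EuclideanSpace ℂ (Fin n)) :=
  {v | ∃ x : ℕ → EuclideanSpace ℂ (Fin n), (∀ j, x j ∈ X) ∧
    Filter.Tendsto (fun j => (t j)⁻¹ • x j) Filter.atTop (nhds v)}

/-- Let `V₁, V₂` be complementary complex linear subspaces of `ℂⁿ`,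
with projection `π : z ↦ z'` onto `V₁` along `V₂`.  Let `X ⊆ ℂⁿ` be an unbounded set
with a unique tangent cone at infinity `C`, and suppose `A > 0`, `B ≥ 1` are such
that every `v ∈ C` satisfies `‖v - π v‖ < A(1 + ‖π v‖)^B`.  Fix `v ∈ V₁`, `T₀ > 0`,
and let `l : [T₀, ∞) → X` be any function whose `V₁`-component is `π (l t) = t • v`.
Then `t ↦ ‖l t - t • v‖ / t` is bounded on `[T₀, ∞)`. -/
theorem statement5 (n : ℕ) (hn : 2 ≤ n)
    (V₁ V₂ : Submodule ℂ (EuclideanSpace ℂ (Fin n))) (hcompl : IsCompl V₁ V₂)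
    (π : EuclideanSpace ℂ (Fin n) → EuclideanSpace ℂ (Fin n))
    (hπ : ∀ z, π z ∈ V₁ ∧ z - π z ∈ V₂)
    (X : Set (EuclideanSpace ℂ (Fin n))) (hX : ¬ Bornology.IsBounded X)
    (C : Set (EuclideanSpace ℂ (Fin n)))
    (hC : ∀ t : ℕ → ℝ, (∀ j, 0 < t j) → Filter.Tendsto t Filter.atTop Filter.atTop →
        tangentConeAtInftyWrt n X t = C)
    (A B : ℝ) (hA : 0 < A) (hB : 1 ≤ B)
    (hcone : ∀ v ∈ C, ‖v - π v‖ < A * (1 + ‖π v‖) ^ B)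
    (v : EuclideanSpace ℂ (Fin n)) (hv : v ∈ V₁)
    (T₀ : ℝ) (hT₀ : 0 < T₀)
    (l : ℝ → EuclideanSpace ℂ (Fin n))
    (hlX : ∀ t : ℝ, T₀ ≤ t → l t ∈ X)
    (hlπ : ∀ t : ℝ, T₀ ≤ t → π (l t) = t • v) :
    ∃ M : ℝ, ∀ t : ℝ, T₀ ≤ t → ‖l t - t • v‖ / t ≤ M := by
  classical
  -- The projection π coincides with the linear projection onto V₁ along V₂.
  set P : EuclideanSpace ℂ (Fin n) →ₗ[ℂ] EuclideanSpace ℂ (Fin n) :=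
    V₁.subtype.comp (V₁.projectionOnto V₂ hcompl) with hP
  have hπP : ∀ z, π z = P z := by
    intro z
    have h1 := (hπ z).1
    have h2 := (hπ z).2
    have hz : z = π z + (z - π z) := by abel
    have hsplit : P z = P (π z) + P (z - π z) := by rw [← map_add]; exact congrArg P hz
    have hPl : P (π z) = π z := by
      simp only [hP, LinearMap.comp_apply, Submodule.subtype_apply]
      rw [show π z = ((⟨π z, h1⟩ : V₁) : EuclideanSpace ℂ (Fin n)) from rfl,
        Submodule.linearProjOfIsCompl_apply_left hcompl]
    have hPr : P (z - π z) = 0 := by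
      simp only [hP, LinearMap.comp_apply, Submodule.subtype_apply]
      rw [show z - π z = ((⟨z - π z, h2⟩ : V₂) : EuclideanSpace ℂ (Fin n)) from rfl,
        Submodule.linearProjOfIsCompl_apply_right hcompl]
      simp
    rw [hsplit, hPl, hPr, add_zero]
  have hPcont : Continuous P := P.continuous_of_finiteDimensional
  by_contra hM
  push_neg at hM
  -- choose bad times
  choose tt htt1 htt2 using fun j : ℕ => hM ((j + 1 : ℝ) + ‖v‖)
  set x : ℕ → EuclideanSpace ℂ (Fin n) := fun j => l (tt j) with hxdef
  have htpos : ∀ j, 0 < tt j := fun j => lt_of_lt_of_le hT₀ (htt1 j)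
  have hxlarge : ∀ j : ℕ, ((j : ℝ) + 1) * tt j < ‖x j‖ := by
    intro j
    have h2 := htt2 j
    rw [lt_div_iff₀ (htpos j)] at h2
    have h4 : ‖x j - tt j • v‖ ≤ ‖x j‖ + tt j * ‖v‖ := by
      calc ‖x j - tt j • v‖ ≤ ‖x j‖ + ‖tt j • v‖ := norm_sub_le _ _
        _ = ‖x j‖ + tt j * ‖v‖ := by
            rw [norm_smul, Real.norm_of_nonneg (htpos j).le]
    nlinarith [htpos j]
  have hxpos : ∀ j, 0 < ‖x j‖ := by
    intro j
    have h := hxlarge j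
    have : (0:ℝ) ≤ (j : ℝ) := Nat.cast_nonneg j
    nlinarith [htpos j]
  set uu : ℕ → EuclideanSpace ℂ (Fin n) := fun j => ‖x j‖⁻¹ • x j with huudef
  have huun : ∀ j, ‖uu j‖ = 1 := by
    intro j
    simp only [huudef, norm_smul, norm_inv, Real.norm_of_nonneg (norm_nonneg (x j))]
    exact inv_mul_cancel₀ (hxpos j).ne'
  -- extract a convergent subsequence
  have hball : ∀ j, uu j ∈ Metric.closedBall (0 : EuclideanSpace ℂ (Fin n)) 1 := by
    intro j
    simp [Metric.mem_closedBall, dist_zero_right, (huun j).le]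
  obtain ⟨u, -, φ, hφ, hconv⟩ :=
    tendsto_subseq_of_bounded Metric.isBounded_closedBall hball
  have hun : ‖u‖ = 1 := by
    have h1 : Filter.Tendsto (fun j => ‖uu (φ j)‖) Filter.atTop (nhds ‖u‖) :=
      (continuous_norm.tendsto u).comp hconv
    have h2 : Filter.Tendsto (fun j => ‖uu (φ j)‖) Filter.atTop (nhds 1) := by
      simp only [huun]; exact tendsto_const_nhds
    exact tendsto_nhds_unique h1 h2
  -- the rescaling sequence
  set t' : ℕ → ℝ := fun j => ‖x (φ j)‖ / A with ht'def
  have ht'pos : ∀ j, 0 < t' j := fun j => div_pos (hxpos _) hA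
  have hφge : ∀ j : ℕ, (j : ℝ) ≤ (φ j : ℝ) := fun j => Nat.cast_le.mpr (hφ.id_le j)
  have hxlow : ∀ j : ℕ, ((j : ℝ) + 1) * T₀ ≤ ‖x (φ j)‖ := by
    intro j
    have h1 := hxlarge (φ j)
    have h2 : ((j : ℝ) + 1) * T₀ ≤ ((φ j : ℝ) + 1) * tt (φ j) := by
      have h3 := htt1 (φ j)
      have h4 := hφge j
      have : (0:ℝ) ≤ (j : ℝ) := Nat.cast_nonneg j
      nlinarith
    linarith
  have ht'top : Filter.Tendsto t' Filter.atTop Filter.atTop := by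
    have hnat : Filter.Tendsto (fun j : ℕ => (j : ℝ)) Filter.atTop Filter.atTop :=
      tendsto_natCast_atTop_atTop
    have hnat1 : Filter.Tendsto (fun j : ℕ => (j : ℝ) + 1) Filter.atTop Filter.atTop :=
      Filter.tendsto_atTop_add_const_right _ 1 hnat
    have hbase : Filter.Tendsto (fun j : ℕ => ((j : ℝ) + 1) * T₀ / A)
        Filter.atTop Filter.atTop :=
      (hnat1.atTop_mul_const hT₀).atTop_div_const hA
    apply Filter.tendsto_atTop_mono (fun j => ?_) hbase
    show ((j : ℝ) + 1) * T₀ / A ≤ ‖x (φ j)‖ / A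
    gcongr
    exact hxlow j
  -- A • u belongs to C
  have hmem : A • u ∈ C := by
    rw [← hC t' ht'pos ht'top]
    refine ⟨fun j => x (φ j), fun j => hlX _ (htt1 _), ?_⟩
    have heq : ∀ j, (t' j)⁻¹ • x (φ j) = A • uu (φ j) := by
      intro j
      simp only [huudef, ht'def, smul_smul, inv_div]
      congr 1
    simp only [heq]
    exact hconv.const_smul A
  -- compute π u = 0
  have hPuu : ∀ j, P (uu j) = (tt j / ‖x j‖) • v := by
    intro j
    have hPx : P (x j) = tt j • v := by
      rw [← hπP]; exact hlπ _ (htt1 j)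
    simp only [huudef]
    rw [P.map_smul_of_tower, hPx, smul_smul, div_eq_inv_mul]
  have hratio : Filter.Tendsto (fun j => tt (φ j) / ‖x (φ j)‖) Filter.atTop (nhds 0) := by
    apply squeeze_zero (fun j => div_nonneg (htpos _).le (norm_nonneg _))
      (g := fun j : ℕ => 1 / ((j : ℝ) + 1))
    · intro j
      have h1 := hxlarge (φ j)
      have h2 : ((j : ℝ) + 1) * tt (φ j) ≤ ((φ j : ℝ) + 1) * tt (φ j) := by
        have := hφge j
        nlinarith [htpos (φ j)]
      have hj1 : (0:ℝ) < (j : ℝ) + 1 := by positivity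
      rw [div_le_div_iff₀ (hxpos _) hj1]
      nlinarith [htpos (φ j)]
    · exact tendsto_one_div_add_atTop_nhds_zero_nat
  have hPu : P u = 0 := by
    have h1 : Filter.Tendsto (fun j => P (uu (φ j))) Filter.atTop (nhds (P u)) :=
      (hPcont.tendsto u).comp hconv
    have h2 : Filter.Tendsto (fun j => P (uu (φ j))) Filter.atTop
        (nhds ((0:ℝ) • v)) := by
      simp only [hPuu]
      exact hratio.smul_const v
    rw [zero_smul] at h2
    exact tendsto_nhds_unique h1 h2
  -- contradiction with the cone estimate
  have hπAu : π (A • u) = 0 := by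
    rw [hπP, P.map_smul_of_tower, hPu, smul_zero]
  have hfinal := hcone (A • u) hmem
  rw [hπAu, sub_zero, norm_zero, add_zero, Real.one_rpow, mul_one, norm_smul,
    Real.norm_of_nonneg hA.le, hun, mul_one] at hfinal
  exact lt_irrefl A hfinal
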